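/- Fix an integer d ≥ 3 and let α > 0. For n ∈ ℕ let H_n be the polynomial defined by the recurrence A_{n,n} = 1, A_{n,k-1} = -(2k(2k+d-2)/(n-k+1))·A_{n,k}, and set φ_{2n}(y) = H_n(2α y²). Then for all natural numbers n ≠ m, the weighted orthogonality relation ∫₀^∞ φ_{2n}(y)·φ_{2m}(y)·y^{d-1}·e^{-α y²/2} dy = 0 holds. -/

import Mathlib

open Finset MeasureTheory

private lemma aux_alt_sum : ∀ (j n : ℕ), j < n → ∀ c : ℝ,
    ∑ k ∈ Finset.range (n + 1), (-1 : ℝ) ^ k * (n.choose k : ℝ) *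
      ∏ i ∈ Finset.range j, (c + (k : ℝ) + (i : ℝ)) = 0 := by
  intro j
  induction j with
  | zero =>
    intro n hn c
    simp only [Finset.range_zero, Finset.prod_empty, mul_one]
    have h0 : n ≠ 0 := by omega
    have := Int.alternating_sum_range_choose_of_ne h0
    have h : ((∑ i ∈ Finset.range (n + 1), (-1 : ℤ) ^ i * (n.choose i : ℤ) : ℤ) : ℝ) = 0 := by
      rw [this]; simp
    push_cast at h
    convert h using 2
  | succ j ih =>
    intro n hn c
    obtain ⟨n', rfl⟩ : ∃ n', n = n' + 1 := ⟨n - 1, by omega⟩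
    have expand : ∀ k ∈ Finset.range (n' + 1 + 1),
        (-1 : ℝ) ^ k * ((n' + 1).choose k : ℝ) * ∏ i ∈ Finset.range (j + 1), (c + k + i)
        = (c + j) * ((-1 : ℝ) ^ k * ((n' + 1).choose k : ℝ) * ∏ i ∈ Finset.range j, (c + k + i))
          + (k : ℝ) * ((-1 : ℝ) ^ k * ((n' + 1).choose k : ℝ) *
              ∏ i ∈ Finset.range j, (c + k + i)) := by
      intro k _
      rw [Finset.prod_range_succ]
      ring
    rw [Finset.sum_congr rfl expand, Finset.sum_add_distrib, ← Finset.mul_sum,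
      ih (n' + 1) (by omega) c, mul_zero, zero_add]
    rw [Finset.sum_range_succ']
    simp only [Nat.cast_zero, zero_mul, add_zero]
    have key : ∀ k ∈ Finset.range (n' + 1),
        ((k + 1 : ℕ) : ℝ) * ((-1 : ℝ) ^ (k + 1) * ((n' + 1).choose (k + 1) : ℝ) *
          ∏ i ∈ Finset.range j, (c + ((k + 1 : ℕ) : ℝ) + i))
        = (-(n' + 1) : ℝ) * ((-1 : ℝ) ^ k * (n'.choose k : ℝ) *
            ∏ i ∈ Finset.range j, ((c + 1) + (k : ℝ) + (i : ℝ))) := by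
      intro k _
      have hch : ((n' + 1 : ℕ) : ℝ) * (n'.choose k : ℝ)
          = ((n' + 1).choose (k + 1) : ℝ) * ((k + 1 : ℕ) : ℝ) := by
        exact_mod_cast congrArg (Nat.cast : ℕ → ℝ) (Nat.add_one_mul_choose_eq n' k)
      have hprod : ∏ i ∈ Finset.range j, (c + ((k + 1 : ℕ) : ℝ) + i)
          = ∏ i ∈ Finset.range j, ((c + 1) + (k : ℝ) + (i : ℝ)) := by
        apply Finset.prod_congr rfl; intro i _; push_cast; ring
      rw [hprod, pow_succ]
      push_cast at hch ⊢
      linear_combination ((-1 : ℝ) ^ k * ∏ i ∈ Finset.range j, (c + 1 + (k : ℝ) + i)) * hch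
    rw [Finset.sum_congr rfl key, ← Finset.mul_sum, ih n' (by omega) (c + 1), mul_zero]

private lemma aux_gamma_prod (c : ℝ) (hc : 0 < c) :
    ∀ p : ℕ, Real.Gamma ((p : ℝ) + c) = Real.Gamma c * ∏ i ∈ Finset.range p, (c + i) := by
  intro p
  induction p with
  | zero => simp
  | succ p ih =>
    have h : ((p + 1 : ℕ) : ℝ) + c = ((p : ℝ) + c) + 1 := by push_cast; ring
    have hne : (p : ℝ) + c ≠ 0 := by positivity
    rw [h, Real.Gamma_add_one hne, ih, Finset.prod_range_succ]
    ring

private lemma aux_moment (d : ℕ) (hd : 3 ≤ d) {α : ℝ} (hα : 0 < α) (p : ℕ) :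
    ∫ y in Set.Ioi (0 : ℝ), y ^ (((2 * p + (d - 1) : ℕ)) : ℝ) * Real.exp (-(α / 2) * y ^ 2)
      = ((α / 2) ^ (-((d : ℝ) / 2)) * (1 / 2) * Real.Gamma ((d : ℝ) / 2)) * (2 / α) ^ p *
        ∏ i ∈ Finset.range p, ((d : ℝ) / 2 + i) := by
  have h2 : (0 : ℝ) < α / 2 := by linarith
  have hd1 : (1 : ℕ) ≤ d := by omega
  have hcast : (((2 * p + (d - 1) : ℕ)) : ℝ) = 2 * (p : ℝ) + (d : ℝ) - 1 := by
    push_cast [Nat.cast_sub hd1]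
    ring
  have hd3 : (3 : ℝ) ≤ (d : ℝ) := by exact_mod_cast hd
  have hq : (-1 : ℝ) < 2 * (p : ℝ) + (d : ℝ) - 1 := by
    have : (0 : ℝ) ≤ (p : ℝ) := Nat.cast_nonneg p
    linarith
  rw [hcast]
  have hrw : ∫ y in Set.Ioi (0 : ℝ), y ^ ((2 * (p : ℝ) + (d : ℝ) - 1)) * Real.exp (-(α / 2) * y ^ 2)
      = ∫ y in Set.Ioi (0 : ℝ), y ^ ((2 * (p : ℝ) + (d : ℝ) - 1)) *
          Real.exp (-(α / 2) * y ^ (2 : ℝ)) := by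
    simp_rw [Real.rpow_two]
  rw [hrw, integral_rpow_mul_exp_neg_mul_rpow two_pos hq h2]
  have e1 : -(2 * (p : ℝ) + (d : ℝ) - 1 + 1) / 2 = -((d : ℝ) / 2) + (-(p : ℝ)) := by ring
  have e2 : (2 * (p : ℝ) + (d : ℝ) - 1 + 1) / 2 = (p : ℝ) + (d : ℝ) / 2 := by ring
  rw [e1, e2, Real.rpow_add h2, aux_gamma_prod _ (by positivity) p]
  have e3 : (α / 2) ^ (-(p : ℝ)) = (2 / α) ^ p := by
    rw [Real.rpow_neg h2.le, Real.rpow_natCast, ← inv_pow, inv_div]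
  rw [e3]
  ring

theorem kummer_eigenfunctions_orthogonal
    (d : ℕ) (hd : 3 ≤ d) (α : ℝ) (hα : 0 < α)
    (A : ℕ → ℕ → ℝ)
    (hAn : ∀ n : ℕ, A n n = 1)
    (hArec : ∀ n k : ℕ, 1 ≤ k → k ≤ n →
      A n (k - 1) = -(2 * (k : ℝ) * (2 * (k : ℝ) + (d : ℝ) - 2) / ((n : ℝ) - (k : ℝ) + 1)) * A n k)
    (φ : ℕ → ℝ → ℝ)
    (hφ : ∀ n : ℕ, ∀ y : ℝ,
      φ n y = ∑ k ∈ Finset.range (n + 1), A n k * (2 * α * y ^ 2) ^ k) :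
    ∀ n m : ℕ, n ≠ m →
      ∫ y in Set.Ioi (0 : ℝ),
        φ n y * φ m y * y ^ (d - 1) * Real.exp (-α * y ^ 2 / 2) = 0 := by
  -- closed form for A
  have hAclosed : ∀ n : ℕ, ∀ j : ℕ, j ≤ n →
      A n (n - j) = (-4 : ℝ) ^ j * (n.choose (n - j) : ℝ) *
        ∏ i ∈ Finset.Ico (n - j) n, ((d : ℝ) / 2 + i) := by
    intro n j
    induction j with
    | zero => intro _; simp [hAn]
    | succ j ih =>
      intro hj
      have hih := ih (by omega)
      obtain ⟨t, ht⟩ : ∃ t, n - j = t + 1 := ⟨n - j - 1, by omega⟩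
      have htn : t < n := by omega
      rw [ht] at hih
      have hrec := hArec n (t + 1) (by omega) (by omega)
      simp only [Nat.add_sub_cancel] at hrec
      rw [show n - (j + 1) = t by omega, hrec, hih]
      have hsplit : ∏ i ∈ Finset.Ico t n, ((d : ℝ) / 2 + i)
          = ((d : ℝ) / 2 + (t : ℝ)) * ∏ i ∈ Finset.Ico (t + 1) n, ((d : ℝ) / 2 + i) :=
        Finset.prod_eq_prod_Ico_succ_bot htn _
      have hchR : (n.choose (t + 1) : ℝ) * ((t : ℝ) + 1) = (n.choose t : ℝ) * ((n : ℝ) - (t : ℝ)) := by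
        have := congrArg (Nat.cast : ℕ → ℝ) (Nat.choose_succ_right_eq n t)
        push_cast [Nat.cast_sub htn.le] at this
        linarith [this]
      have hden : (n : ℝ) - ((t : ℝ) + 1) + 1 ≠ 0 := by
        have : (t : ℝ) + 1 ≤ (n : ℝ) := by exact_mod_cast htn
        intro h; nlinarith
      rw [hsplit, pow_succ]
      set P : ℝ := ∏ i ∈ Finset.Ico (t + 1) n, ((d : ℝ) / 2 + i) with hP
      push_cast at hden ⊢
      rw [← neg_div, div_mul_eq_mul_div, div_eq_iff hden]
      linear_combination (-2 * (2 * (t : ℝ) + (d : ℝ)) * (-4 : ℝ) ^ j * P) * hchR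
  have h2 : (0 : ℝ) < α / 2 := by linarith
  have key : ∀ n m : ℕ, m < n →
      ∫ y in Set.Ioi (0 : ℝ), φ n y * φ m y * y ^ (d - 1) * Real.exp (-α * y ^ 2 / 2) = 0 := by
    intro n m hmn
    have hAc : ∀ k, k ≤ n → A n k = (-4 : ℝ) ^ (n - k) * (n.choose k : ℝ) *
        ∏ i ∈ Finset.Ico k n, ((d : ℝ) / 2 + i) := by
      intro k hk
      have := hAclosed n (n - k) (by omega)
      rwa [show n - (n - k) = k by omega] at this
    have hfun : ∀ y : ℝ, φ n y * φ m y * y ^ (d - 1) * Real.exp (-α * y ^ 2 / 2)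
        = ∑ l ∈ Finset.range (m + 1), ∑ k ∈ Finset.range (n + 1),
            (A n k * A m l * (2 * α) ^ (k + l)) *
              (y ^ (((2 * (k + l) + (d - 1) : ℕ)) : ℝ) * Real.exp (-(α / 2) * y ^ 2)) := by
      intro y
      rw [hφ n y, hφ m y, Finset.sum_mul_sum]
      simp only [Finset.sum_mul]
      rw [Finset.sum_comm]
      apply Finset.sum_congr rfl; intro l _
      apply Finset.sum_congr rfl; intro k _
      rw [Real.rpow_natCast, show -(α / 2) * y ^ 2 = -α * y ^ 2 / 2 by ring]
      ring
    have hint : ∀ (N : ℕ) (C : ℝ), Integrable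
        (fun y : ℝ => C * (y ^ ((N : ℕ) : ℝ) * Real.exp (-(α / 2) * y ^ 2)))
        (volume.restrict (Set.Ioi 0)) := by
      intro N C
      exact (integrableOn_rpow_mul_exp_neg_mul_sq h2
        (s := ((N : ℕ) : ℝ)) (neg_one_lt_zero.trans_le (Nat.cast_nonneg N))).const_mul C
    simp only [hfun]
    rw [integral_finset_sum _ (fun l _ => integrable_finset_sum _ (fun k _ => hint _ _))]
    refine Finset.sum_eq_zero fun l hl => ?_
    rw [integral_finset_sum _ (fun k _ => hint _ _)]
    have hmom : ∀ k : ℕ, (∫ y in Set.Ioi (0 : ℝ), (A n k * A m l * (2 * α) ^ (k + l)) *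
          (y ^ (((2 * (k + l) + (d - 1) : ℕ)) : ℝ) * Real.exp (-(α / 2) * y ^ 2)))
        = (A n k * A m l * (2 * α) ^ (k + l)) *
            (((α / 2) ^ (-((d : ℝ) / 2)) * (1 / 2) * Real.Gamma ((d : ℝ) / 2)) * (2 / α) ^ (k + l) *
              ∏ i ∈ Finset.range (k + l), ((d : ℝ) / 2 + i)) := by
      intro k
      rw [MeasureTheory.integral_const_mul, aux_moment d hd hα (k + l)]
    rw [Finset.sum_congr rfl (fun k _ => hmom k)]
    have hln : l < n := by have := Finset.mem_range.mp hl; omega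
    set B : ℝ := (α / 2) ^ (-((d : ℝ) / 2)) * (1 / 2) * Real.Gamma ((d : ℝ) / 2) with hB
    have hterm : ∀ k ∈ Finset.range (n + 1),
        (A n k * A m l * (2 * α) ^ (k + l)) *
            (B * (2 / α) ^ (k + l) * ∏ i ∈ Finset.range (k + l), ((d : ℝ) / 2 + i))
        = (A m l * B * 4 ^ l * 4 ^ n * (-1 : ℝ) ^ n * ∏ i ∈ Finset.range n, ((d : ℝ) / 2 + i)) *
            ((-1 : ℝ) ^ k * (n.choose k : ℝ) *
              ∏ i ∈ Finset.range l, ((d : ℝ) / 2 + (k : ℝ) + (i : ℝ))) := by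
      intro k hk
      have hkn : k ≤ n := by have := Finset.mem_range.mp hk; omega
      rw [hAc k hkn]
      have h1 : ∏ i ∈ Finset.range (k + l), ((d : ℝ) / 2 + i)
          = (∏ i ∈ Finset.range k, ((d : ℝ) / 2 + i)) *
              ∏ i ∈ Finset.range l, ((d : ℝ) / 2 + (k : ℝ) + (i : ℝ)) := by
        rw [Finset.prod_range_add]
        congr 1
        apply Finset.prod_congr rfl; intro i _; push_cast; ring
      have hsw : (∏ i ∈ Finset.Ico k n, ((d : ℝ) / 2 + i)) *
          ∏ i ∈ Finset.range k, ((d : ℝ) / 2 + i) = ∏ i ∈ Finset.range n, ((d : ℝ) / 2 + i) := by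
        rw [Finset.range_eq_Ico, mul_comm,
          Finset.prod_Ico_consecutive _ (Nat.zero_le k) hkn, Finset.range_eq_Ico]
      have h3 : ((2 * α : ℝ)) ^ (k + l) * (2 / α) ^ (k + l) = 4 ^ k * 4 ^ l := by
        rw [← mul_pow, show (2 * α) * (2 / α) = 4 by field_simp; ring, pow_add]
      have h4 : (-4 : ℝ) ^ (n - k) * 4 ^ k = (-1 : ℝ) ^ n * (-1) ^ k * 4 ^ n := by
        have ha' : (-4 : ℝ) ^ (n - k) * ((-1 : ℝ) ^ k * 4 ^ k) = (-1 : ℝ) ^ n * 4 ^ n :=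
          calc (-4 : ℝ) ^ (n - k) * ((-1 : ℝ) ^ k * 4 ^ k)
              = (-4 : ℝ) ^ (n - k) * (-4) ^ k := by rw [← mul_pow]; norm_num
            _ = (-4 : ℝ) ^ n := by rw [← pow_add, Nat.sub_add_cancel hkn]
            _ = (-1 : ℝ) ^ n * 4 ^ n := by rw [← mul_pow]; norm_num
        have hb : ((-1 : ℝ)) ^ k * (-1 : ℝ) ^ k = 1 := by rw [← mul_pow]; norm_num
        linear_combination ((-1 : ℝ) ^ k) * ha' - ((-4 : ℝ) ^ (n - k) * 4 ^ k) * hb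
      rw [h1]
      linear_combination
        ((-4 : ℝ) ^ (n - k) * (n.choose k : ℝ) * (∏ i ∈ Finset.Ico k n, ((d : ℝ) / 2 + i)) *
          A m l * B * (∏ i ∈ Finset.range k, ((d : ℝ) / 2 + i)) *
          (∏ i ∈ Finset.range l, ((d : ℝ) / 2 + (k : ℝ) + (i : ℝ)))) * h3 +
        ((n.choose k : ℝ) * A m l * B * 4 ^ l * (∏ i ∈ Finset.Ico k n, ((d : ℝ) / 2 + i)) *
          (∏ i ∈ Finset.range k, ((d : ℝ) / 2 + i)) *
          (∏ i ∈ Finset.range l, ((d : ℝ) / 2 + (k : ℝ) + (i : ℝ)))) * h4 +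
        ((n.choose k : ℝ) * A m l * B * 4 ^ l * (-1 : ℝ) ^ n * (-1 : ℝ) ^ k * 4 ^ n *
          (∏ i ∈ Finset.range l, ((d : ℝ) / 2 + (k : ℝ) + (i : ℝ)))) * hsw
    rw [Finset.sum_congr rfl hterm, ← Finset.mul_sum, aux_alt_sum l n hln ((d : ℝ) / 2), mul_zero]
  intro n m hnm
  rcases Nat.lt_or_ge m n with h | h
  · exact key n m h
  · have hmn : n < m := by omega
    have hswap : (fun y : ℝ => φ n y * φ m y * y ^ (d - 1) * Real.exp (-α * y ^ 2 / 2))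
        = fun y : ℝ => φ m y * φ n y * y ^ (d - 1) * Real.exp (-α * y ^ 2 / 2) := by
      funext y; ring
    rw [hswap]
    exact key m n hmn
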